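/- For all integers t ≥ 1 and k with 0 ≤ k and 3k ≤ 2t: Σ_{j=0}^{k} C(2t−3k, t−3j) · C(2k, 2j) ≤ C(2t, t). -/

import Mathlib

lemma aux_choose_23 (a b : ℕ) (hb : b ≤ a) :
    Nat.choose (2 * a) (2 * b) ≤ Nat.choose (3 * a) (3 * b) := by
  have h3 : 3 * a = 2 * a + a := by ring
  rw [h3, Nat.add_choose_eq]
  have hm : ((2 * b, b) : ℕ × ℕ) ∈ Finset.HasAntidiagonal.antidiagonal (3 * b) := by
    rw [Finset.HasAntidiagonal.mem_antidiagonal]; ring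
  calc Nat.choose (2 * a) (2 * b) = Nat.choose (2 * a) (2 * b) * 1 := (mul_one _).symm
    _ ≤ Nat.choose (2 * a) (2 * b) * Nat.choose a b :=
        Nat.mul_le_mul_left _ (Nat.one_le_iff_ne_zero.mpr (Nat.choose_pos hb).ne')
    _ ≤ _ := Finset.single_le_sum
        (f := fun ij : ℕ × ℕ => Nat.choose (2 * a) ij.1 * Nat.choose a ij.2)
        (fun i _ => Nat.zero_le _) hm

/-- For all `t ≥ 1` and `k ≥ 0` with `3k ≤ 2t`:
`Σ_{j=0}^{k} C(2t-3k, t-3j) · C(2k, 2j) ≤ C(2t, t)`.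
Terms where the lower index `t-3j` would be negative are `0`, handled by the guard
`3*j ≤ t`. -/
theorem stmt7 (t k : ℕ) (ht : 1 ≤ t) (hkt : 3 * k ≤ 2 * t) :
    ∑ j ∈ Finset.range (k + 1),
        (if 3 * j ≤ t then
          Nat.choose (2 * t - 3 * k) (t - 3 * j) * Nat.choose (2 * k) (2 * j)
        else 0)
      ≤ Nat.choose (2 * t) t := by
  have h2t : 2 * t = 3 * k + (2 * t - 3 * k) := by omega
  calc ∑ j ∈ Finset.range (k + 1),
        (if 3 * j ≤ t then
          Nat.choose (2 * t - 3 * k) (t - 3 * j) * Nat.choose (2 * k) (2 * j)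
        else 0)
      ≤ ∑ j ∈ Finset.range (k + 1),
        (if 3 * j ≤ t then
          Nat.choose (2 * t - 3 * k) (t - 3 * j) * Nat.choose (3 * k) (3 * j)
        else 0) := by
        apply Finset.sum_le_sum
        intro j hj
        split
        · exact Nat.mul_le_mul_left _
            (aux_choose_23 k j (by simpa using Nat.lt_succ_iff.mp (Finset.mem_range.mp hj)))
        · exact le_refl _
    _ = ∑ j ∈ (Finset.range (k + 1)).filter (fun j => 3 * j ≤ t),
          Nat.choose (2 * t - 3 * k) (t - 3 * j) * Nat.choose (3 * k) (3 * j) :=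
        (Finset.sum_filter _ _).symm
    _ = ∑ i ∈ ((Finset.range (k + 1)).filter (fun j => 3 * j ≤ t)).image (fun j => 3 * j),
          Nat.choose (2 * t - 3 * k) (t - i) * Nat.choose (3 * k) i := by
        rw [Finset.sum_image (by intro x _ y _ h; simp only at h; omega)]
    _ ≤ ∑ i ∈ Finset.range (t + 1),
          Nat.choose (2 * t - 3 * k) (t - i) * Nat.choose (3 * k) i := by
        apply Finset.sum_le_sum_of_subset
        intro i hi
        simp only [Finset.mem_image, Finset.mem_filter, Finset.mem_range] at hi ⊢
        omega
    _ = Nat.choose (2 * t) t := by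
        have hv := Nat.add_choose_eq (3 * k) (2 * t - 3 * k) t
        rw [Finset.Nat.sum_antidiagonal_eq_sum_range_succ
          (fun i j => Nat.choose (3 * k) i * Nat.choose (2 * t - 3 * k) j), ← h2t] at hv
        rw [hv]
        exact Finset.sum_congr rfl (fun i _ => mul_comm _ _)
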